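/- Let G be a finite simple graph and let H be a finite bipartite simple graph in which every vertex has odd degree. Then 2·αod(G □ H) ≥ |V(H)| · αod(G □ K_2), where G □ K_2 is the Cartesian product of G with a single edge. -/

import Mathlib

open Finset

section OddIndepDefs

variable {V : Type*} [Fintype V] [DecidableEq V]

/-- `S` is an odd independent set in `G`: `S` is independent and every vertex outside `S`
has either no neighbor in `S` or an odd number of neighbors in `S`. -/
def IsOddIndepSet (G : SimpleGraph V) [DecidableRel G.Adj] (S : Finset V) : Prop :=
  (∀ u ∈ S, ∀ v ∈ S, ¬ G.Adj u v) ∧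
  ∀ v ∉ S, (S.filter fun u => G.Adj v u) = ∅ ∨ Odd (S.filter fun u => G.Adj v u).card

/-- The odd independence number: the largest size of an odd independent set. -/
noncomputable def oddIndepNum (G : SimpleGraph V) [DecidableRel G.Adj] : ℕ :=
  sSup {k | ∃ S : Finset V, IsOddIndepSet G S ∧ S.card = k}

/-- The independence number: the largest size of an independent set. -/
noncomputable def indepNum (G : SimpleGraph V) : ℕ :=
  sSup {k | ∃ S : Finset V, (∀ u ∈ S, ∀ v ∈ S, ¬ G.Adj u v) ∧ S.card = k}

/-- A strong odd coloring with `n` colors: a proper coloring such that for every vertex `v`,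
every color appearing in the open neighborhood of `v` appears there an odd number of times. -/
def IsStrongOddColoring (G : SimpleGraph V) [DecidableRel G.Adj] {n : ℕ} (c : V → Fin n) : Prop :=
  (∀ u v, G.Adj u v → c u ≠ c v) ∧
  ∀ v : V, ∀ k : Fin n,
    (univ.filter fun u => G.Adj v u ∧ c u = k) = ∅ ∨
    Odd (univ.filter fun u => G.Adj v u ∧ c u = k).card

/-- The strong odd chromatic number: minimum number of colors of a strong odd coloring. -/
noncomputable def strongOddChromNum (G : SimpleGraph V) [DecidableRel G.Adj] : ℕ :=
  sInf {n | ∃ c : V → Fin n, IsStrongOddColoring G c}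

/-- The chromatic number, as a natural number. -/
noncomputable def chromNum (G : SimpleGraph V) : ℕ :=
  sInf {n | ∃ c : V → Fin n, ∀ u v, G.Adj u v → c u ≠ c v}

/-- The square of a graph: two distinct vertices are adjacent iff they are at distance at most 2,
i.e. adjacent or having a common neighbor. -/
def graphSquare (G : SimpleGraph V) : SimpleGraph V where
  Adj u v := u ≠ v ∧ (G.Adj u v ∨ ∃ w, G.Adj u w ∧ G.Adj w v)
  symm := by
    constructor
    intro u v h
    refine ⟨h.1.symm, ?_⟩
    rcases h.2 with h' | ⟨w, h1, h2⟩
    · exact Or.inl h'.symm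
    · exact Or.inr ⟨w, h2.symm, h1.symm⟩
  loopless := ⟨fun v h => h.1 rfl⟩

instance (G : SimpleGraph V) [DecidableRel G.Adj] : DecidableRel (graphSquare G).Adj :=
  fun u v => inferInstanceAs (Decidable (u ≠ v ∧ (G.Adj u v ∨ ∃ w, G.Adj u w ∧ G.Adj w v)))

end OddIndepDefs


instance boxProdDecidableRel
    {α β : Type*} [DecidableEq α] [DecidableEq β]
    (G : SimpleGraph α) (H : SimpleGraph β)
    [DecidableRel G.Adj] [DecidableRel H.Adj] :
    DecidableRel (G.boxProd H).Adj := fun x y =>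
  inferInstanceAs (Decidable (G.Adj x.1 y.1 ∧ x.2 = y.2 ∨ H.Adj x.2 y.2 ∧ x.1 = y.1))

section Aux

lemma fin2_eq_add_one {i j : Fin 2} (h : j ≠ i) : j = i + 1 := by
  revert h; revert i j; decide

lemma fin2_add_one_ne (i : Fin 2) : i + 1 ≠ i := by revert i; decide

lemma oddIndep_bddAbove {V : Type*} [Fintype V] [DecidableEq V]
    (G : SimpleGraph V) [DecidableRel G.Adj] :
    BddAbove {k | ∃ S : Finset V, IsOddIndepSet G S ∧ S.card = k} := by
  refine ⟨Fintype.card V, fun k hk => ?_⟩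
  obtain ⟨S, _, hS⟩ := hk
  exact hS ▸ S.card_le_univ

lemma exists_oddIndep_max {V : Type*} [Fintype V] [DecidableEq V]
    (G : SimpleGraph V) [DecidableRel G.Adj] :
    ∃ S : Finset V, IsOddIndepSet G S ∧ S.card = oddIndepNum G := by
  have h : oddIndepNum G ∈ {k | ∃ S : Finset V, IsOddIndepSet G S ∧ S.card = k} := by
    apply Nat.sSup_mem
    · exact ⟨0, ∅, ⟨by simp, fun v _ => Or.inl (by simp)⟩, rfl⟩
    · exact oddIndep_bddAbove G
  exact h

lemma key_isOdd {V W : Type*} [Fintype V] [DecidableEq V] [Fintype W] [DecidableEq W]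
    (G : SimpleGraph V) [DecidableRel G.Adj] (H : SimpleGraph W) [DecidableRel H.Adj]
    (hdeg : ∀ w : W, Odd (H.degree w))
    (c : W → Fin 2) (hc : ∀ u v, H.Adj u v → c u ≠ c v)
    (S : Finset (V × Fin 2)) (hS : IsOddIndepSet (G.boxProd (⊤ : SimpleGraph (Fin 2))) S) :
    IsOddIndepSet (G.boxProd H) (univ.filter fun p : V × W => (p.1, c p.2) ∈ S) := by
  constructor
  · intro p hp q hq hadj
    simp only [mem_filter, mem_univ, true_and] at hp hq
    rw [SimpleGraph.boxProd_adj] at hadj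
    rcases hadj with ⟨hG, he⟩ | ⟨hH, he⟩
    · exact hS.1 _ hp _ hq (SimpleGraph.boxProd_adj.mpr (Or.inl ⟨hG, by rw [he]⟩))
    · refine hS.1 _ hp _ hq (SimpleGraph.boxProd_adj.mpr (Or.inr ⟨?_, he⟩))
      exact (SimpleGraph.top_adj _ _).mpr (hc _ _ hH)
  · rintro ⟨v, w⟩ hvw
    simp only [mem_filter, mem_univ, true_and] at hvw
    set A : Finset V := univ.filter fun v' => G.Adj v v' ∧ (v', c w) ∈ S with hA
    set F : Finset (V × W) := (univ.filter fun p : V × W => (p.1, c p.2) ∈ S).filter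
        (fun u => (G.boxProd H).Adj (v, w) u) with hFdef
    set F' : Finset (V × Fin 2) :=
        S.filter (fun u => (G.boxProd (⊤ : SimpleGraph (Fin 2))).Adj (v, c w) u) with hF'def
    have hb : F' = ∅ ∨ Odd F'.card := hS.2 (v, c w) hvw
    -- cardinality of first parts
    have hF1 : (F.filter fun p => p.2 = w).card = A.card := by
      apply Finset.card_nbij' (fun p => p.1) (fun v' => (v', w))
      · intro p hp
        simp only [Finset.mem_coe, hFdef, mem_filter, mem_univ, true_and] at hp
        obtain ⟨⟨hpS, hadj⟩, hpe⟩ := hp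
        rw [SimpleGraph.boxProd_adj] at hadj
        rw [Finset.mem_coe, hA, mem_filter]
        rcases hadj with ⟨h1, _⟩ | ⟨h1, _⟩
        · exact ⟨mem_univ _, h1, by rwa [hpe] at hpS⟩
        · exact absurd (hpe ▸ h1) (H.loopless.irrefl w)
      · intro v' hv'
        simp only [Finset.mem_coe, hA, mem_filter, mem_univ, true_and] at hv'
        refine mem_filter.mpr ⟨mem_filter.mpr ⟨mem_filter.mpr ⟨mem_univ _, hv'.2⟩, ?_⟩, rfl⟩
        exact SimpleGraph.boxProd_adj.mpr (Or.inl ⟨hv'.1, rfl⟩)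
      · intro p hp
        simp only [Finset.mem_coe, hFdef, mem_filter] at hp
        exact Prod.ext rfl hp.2.symm
      · intro v' _
        rfl
    have hF1' : (F'.filter fun q => q.2 = c w).card = A.card := by
      apply Finset.card_nbij' (fun q => q.1) (fun v' => (v', c w))
      · intro q hq
        simp only [Finset.mem_coe, hF'def, mem_filter] at hq
        obtain ⟨⟨hqS, hadj⟩, hqe⟩ := hq
        rw [SimpleGraph.boxProd_adj] at hadj
        rw [Finset.mem_coe, hA, mem_filter]
        rcases hadj with ⟨h1, _⟩ | ⟨h1, _⟩
        · refine ⟨mem_univ _, h1, ?_⟩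
          have hq' : (q.1, c w) = q := Prod.ext rfl hqe.symm
          rwa [hq']
        · exact absurd (hqe ▸ h1) (fun hh => ((SimpleGraph.top_adj _ _).mp hh) rfl)
      · intro v' hv'
        simp only [Finset.mem_coe, hA, mem_filter, mem_univ, true_and] at hv'
        refine mem_filter.mpr ⟨mem_filter.mpr ⟨hv'.2, ?_⟩, rfl⟩
        exact SimpleGraph.boxProd_adj.mpr (Or.inl ⟨hv'.1, rfl⟩)
      · intro q hq
        simp only [Finset.mem_coe, hF'def, mem_filter] at hq
        exact Prod.ext rfl hq.2.symm
      · intro v' _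
        rfl
    -- cardinality of second parts
    have hF2 : (F.filter fun p => ¬ p.2 = w).card =
        if (v, c w + 1) ∈ S then H.degree w else 0 := by
      by_cases hmem : (v, c w + 1) ∈ S
      · rw [if_pos hmem]
        rw [← SimpleGraph.card_neighborFinset_eq_degree]
        apply Finset.card_nbij' (fun p => p.2) (fun w' => (v, w'))
        · intro p hp
          simp only [Finset.mem_coe, hFdef, mem_filter, mem_univ, true_and] at hp
          obtain ⟨⟨_, hadj⟩, hpe⟩ := hp
          rw [SimpleGraph.boxProd_adj] at hadj
          rcases hadj with ⟨_, h2⟩ | ⟨h1, _⟩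
          · exact absurd h2.symm hpe
          · simpa using h1
        · intro w' hw'
          rw [Finset.mem_coe, SimpleGraph.mem_neighborFinset] at hw'
          have hcw' : c w' = c w + 1 := fin2_eq_add_one (fun hh => hc w w' hw' hh.symm)
          refine mem_filter.mpr ⟨mem_filter.mpr ⟨mem_filter.mpr ⟨mem_univ _, ?_⟩, ?_⟩, ?_⟩
          · show (v, c w') ∈ S
            rw [hcw']; exact hmem
          · exact SimpleGraph.boxProd_adj.mpr (Or.inr ⟨hw', rfl⟩)
          · exact hw'.ne'
        · intro p hp
          simp only [Finset.mem_coe, hFdef, mem_filter, mem_univ, true_and] at hp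
          obtain ⟨⟨_, hadj⟩, hpe⟩ := hp
          rw [SimpleGraph.boxProd_adj] at hadj
          rcases hadj with ⟨_, h2⟩ | ⟨_, h2⟩
          · exact absurd h2.symm hpe
          · exact Prod.ext h2 rfl
        · intro w' _
          rfl
      · rw [if_neg hmem]
        rw [Finset.card_eq_zero, Finset.eq_empty_iff_forall_notMem]
        intro p hp
        simp only [hFdef, mem_filter, mem_univ, true_and] at hp
        obtain ⟨⟨hpS, hadj⟩, hpe⟩ := hp
        rw [SimpleGraph.boxProd_adj] at hadj
        rcases hadj with ⟨_, h2⟩ | ⟨h1, h2⟩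
        · exact hpe h2.symm
        · have hcw' : c p.2 = c w + 1 := fin2_eq_add_one (fun hh => hc w p.2 h1 hh.symm)
          rw [hcw', ← h2] at hpS
          exact hmem hpS
    have hF2' : (F'.filter fun q => ¬ q.2 = c w).card =
        if (v, c w + 1) ∈ S then 1 else 0 := by
      by_cases hmem : (v, c w + 1) ∈ S
      · rw [if_pos hmem]
        have heq : F'.filter (fun q => ¬ q.2 = c w) = {(v, c w + 1)} := by
          ext q
          simp only [hF'def, mem_filter, Finset.mem_singleton]
          constructor
          · rintro ⟨⟨hqS, hadj⟩, hqe⟩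
            rw [SimpleGraph.boxProd_adj] at hadj
            rcases hadj with ⟨_, h2⟩ | ⟨_, h2⟩
            · exact absurd h2.symm hqe
            · exact Prod.ext h2.symm (fin2_eq_add_one hqe)
          · rintro rfl
            refine ⟨⟨hmem, SimpleGraph.boxProd_adj.mpr (Or.inr ⟨?_, rfl⟩)⟩, fin2_add_one_ne _⟩
            exact (SimpleGraph.top_adj _ _).mpr (Ne.symm (fin2_add_one_ne _))
        rw [heq, Finset.card_singleton]
      · rw [if_neg hmem]
        rw [Finset.card_eq_zero, Finset.eq_empty_iff_forall_notMem]
        intro q hq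
        simp only [hF'def, mem_filter] at hq
        obtain ⟨⟨hqS, hadj⟩, hqe⟩ := hq
        rw [SimpleGraph.boxProd_adj] at hadj
        rcases hadj with ⟨_, h2⟩ | ⟨_, h2⟩
        · exact hqe h2.symm
        · have hqeq : q = (v, c w + 1) := Prod.ext h2.symm (fin2_eq_add_one hqe)
          exact hmem (hqeq ▸ hqS)
    have hFcard : F.card = A.card + (if (v, c w + 1) ∈ S then H.degree w else 0) := by
      rw [← Finset.card_filter_add_card_filter_not
        (s := F) (p := fun p => p.2 = w), hF1, hF2]
    have hF'card : F'.card = A.card + (if (v, c w + 1) ∈ S then 1 else 0) := by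
      rw [← Finset.card_filter_add_card_filter_not
        (s := F') (p := fun q => q.2 = c w), hF1', hF2']
    by_cases hmem : (v, c w + 1) ∈ S
    · rw [if_pos hmem] at hFcard hF'card
      have hne : ¬(F' = ∅) := by
        intro hzero
        rw [hzero] at hF'card
        simp at hF'card
      have hodd : Odd F'.card := hb.resolve_left hne
      rw [hF'card] at hodd
      have hAeven : Even A.card := by
        rw [Nat.odd_add_one] at hodd
        simpa using hodd
      right
      rw [hFcard]
      exact hAeven.add_odd (hdeg w)
    · rw [if_neg hmem, Nat.add_zero] at hFcard hF'card
      rcases hb with hbe | hbo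
      · left
        rw [← Finset.card_eq_zero, hFcard, ← hF'card, hbe, Finset.card_empty]
      · right
        rw [hFcard, ← hF'card]
        exact hbo

lemma key_card {V W : Type*} [Fintype V] [DecidableEq V] [Fintype W] [DecidableEq W]
    (c : W → Fin 2) (S : Finset (V × Fin 2)) :
    (univ.filter fun p : V × W => (p.1, c p.2) ∈ S).card
      = ∑ w : W, (S.filter fun q => q.2 = c w).card := by
  rw [Finset.card_eq_sum_card_fiberwise (f := Prod.snd) (t := univ) (fun x _ => mem_univ _)]
  refine Finset.sum_congr rfl fun w _ => ?_
  apply Finset.card_nbij' (fun p => (p.1, c w)) (fun q => (q.1, w))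
  · intro p hp
    simp only [Finset.mem_coe, mem_filter, mem_univ, true_and] at hp
    exact mem_filter.mpr ⟨hp.2 ▸ hp.1, rfl⟩
  · intro q hq
    simp only [Finset.mem_coe, mem_filter] at hq
    refine mem_filter.mpr ⟨mem_filter.mpr ⟨mem_univ _, ?_⟩, rfl⟩
    show (q.1, c w) ∈ S
    have : (q.1, c w) = q := Prod.ext rfl hq.2.symm
    rw [this]; exact hq.1
  · intro p hp
    simp only [Finset.mem_coe, mem_filter, mem_univ, true_and] at hp
    exact Prod.ext rfl hp.2.symm
  · intro q hq
    simp only [Finset.mem_coe, mem_filter] at hq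
    exact Prod.ext rfl hq.2.symm

end Aux


/-- If `H` is a finite bipartite simple graph in which every vertex has odd
degree, then `2·αod(G □ H) ≥ |V(H)| · αod(G □ K₂)`. -/
theorem oddIndepNum_boxProd_ge_of_odd_bipartite
    {V W : Type*} [Fintype V] [DecidableEq V] [Fintype W] [DecidableEq W]
    (G : SimpleGraph V) [DecidableRel G.Adj]
    (H : SimpleGraph W) [DecidableRel H.Adj]
    (hbip : H.Colorable 2) (hdeg : ∀ w : W, Odd (H.degree w)) :
    Fintype.card W * oddIndepNum (G.boxProd (⊤ : SimpleGraph (Fin 2))) ≤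
      2 * oddIndepNum (G.boxProd H) := by
  classical
  obtain ⟨S, hS, hScard⟩ := exists_oddIndep_max (G.boxProd (⊤ : SimpleGraph (Fin 2)))
  obtain ⟨c0⟩ := hbip
  set c : W → Fin 2 := fun w => c0 w with hcdef
  have hc : ∀ u v, H.Adj u v → c u ≠ c v := fun u v h => c0.valid h
  have hc' : ∀ u v, H.Adj u v → c u + 1 ≠ c v + 1 :=
    fun u v h hh => hc u v h (add_right_cancel hh)
  have hbdd := oddIndep_bddAbove (G.boxProd H)
  have h1 : ∑ w : W, (S.filter fun q => q.2 = c w).card ≤ oddIndepNum (G.boxProd H) := by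
    rw [← key_card]
    exact le_csSup hbdd ⟨_, key_isOdd G H hdeg c hc S hS, rfl⟩
  have h2 : ∑ w : W, (S.filter fun q => q.2 = c w + 1).card ≤ oddIndepNum (G.boxProd H) := by
    rw [← key_card (fun w => c w + 1)]
    exact le_csSup hbdd ⟨_, key_isOdd G H hdeg (fun w => c w + 1) hc' S hS, rfl⟩
  have hsum : ∑ w : W, (S.filter fun q => q.2 = c w).card
      + ∑ w : W, (S.filter fun q => q.2 = c w + 1).card
      = Fintype.card W * S.card := by
    rw [← Finset.sum_add_distrib]
    have : ∀ w : W, (S.filter fun q => q.2 = c w).card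
        + (S.filter fun q => q.2 = c w + 1).card = S.card := by
      intro w
      have hpred : (S.filter fun q => q.2 = c w + 1)
          = S.filter fun q => ¬ q.2 = c w := by
        apply Finset.filter_congr
        intro q _
        constructor
        · intro h; rw [h]; exact fin2_add_one_ne _
        · intro h; exact fin2_eq_add_one h
      rw [hpred]
      exact Finset.card_filter_add_card_filter_not _
    rw [Finset.sum_congr rfl (fun w _ => this w), Finset.sum_const, Finset.card_univ,
      smul_eq_mul]
  calc Fintype.card W * oddIndepNum (G.boxProd (⊤ : SimpleGraph (Fin 2)))
      = Fintype.card W * S.card := by rw [hScard]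
    _ = ∑ w : W, (S.filter fun q => q.2 = c w).card
        + ∑ w : W, (S.filter fun q => q.2 = c w + 1).card := hsum.symm
    _ ≤ oddIndepNum (G.boxProd H) + oddIndepNum (G.boxProd H) := Nat.add_le_add h1 h2
    _ = 2 * oddIndepNum (G.boxProd H) := (two_mul _).symm
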